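/- Let (A, μ, Δ, α, c, R) be a quasi-triangular Hom-bialgebra. Then R satisfies the quantum Hom-Yang-Baxter equation (R₁₂ R₁₃) R₂₃ = R₂₃ (R₁₃ R₁₂) in A ⊗ A ⊗ A, where R₁₂ = R ⊗ c, R₂₃ = c ⊗ R, R₁₃ = (τ ⊗ Id)(R₂₃), and products in A ⊗ A ⊗ A are taken componentwise using μ. -/
import Mathlib


open TensorProduct

variable {k : Type*} [CommRing k] {A : Type*} [AddCommGroup A] [Module k A]

/-- Componentwise product on `A ⊗ A` induced by a bilinear multiplication `μ`. -/
noncomputable def mulT2 (μ : A →ₗ[k] A →ₗ[k] A) (X Y : A ⊗[k] A) : A ⊗[k] A :=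
  ((TensorProduct.map (TensorProduct.lift μ) (TensorProduct.lift μ)) ∘ₗ
    (TensorProduct.tensorTensorTensorComm k A A A A).toLinearMap) (X ⊗ₜ[k] Y)

/-- Componentwise product on `(A ⊗ A) ⊗ A` induced by `μ`. -/
noncomputable def mulT3 (μ : A →ₗ[k] A →ₗ[k] A) (X Y : (A ⊗[k] A) ⊗[k] A) :
    (A ⊗[k] A) ⊗[k] A :=
  ((TensorProduct.map
      ((TensorProduct.map (TensorProduct.lift μ) (TensorProduct.lift μ)) ∘ₗ
        (TensorProduct.tensorTensorTensorComm k A A A A).toLinearMap)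
      (TensorProduct.lift μ)) ∘ₗ
    (TensorProduct.tensorTensorTensorComm k (A ⊗[k] A) A (A ⊗[k] A) A).toLinearMap)
    (X ⊗ₜ[k] Y)

/-- `R₁₂ = R ⊗ c`. -/
noncomputable def R12e (c : A) (R : A ⊗[k] A) : (A ⊗[k] A) ⊗[k] A := R ⊗ₜ[k] c

/-- `R₂₃ = c ⊗ R`. -/
noncomputable def R23e (c : A) (R : A ⊗[k] A) : (A ⊗[k] A) ⊗[k] A :=
  (TensorProduct.assoc k A A A).symm (c ⊗ₜ[k] R)

/-- `R₁₃ = (τ ⊗ Id)(R₂₃)`. -/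
noncomputable def R13e (c : A) (R : A ⊗[k] A) : (A ⊗[k] A) ⊗[k] A :=
  TensorProduct.map (TensorProduct.comm k A A).toLinearMap LinearMap.id (R23e c R)

section Aux

variable (μ : A →ₗ[k] A →ₗ[k] A)

lemma mulT2_tmul (a b x y : A) :
    mulT2 μ (a ⊗ₜ[k] b) (x ⊗ₜ[k] y) = μ a x ⊗ₜ[k] μ b y := by
  simp [mulT2]

lemma mulT3_tmul (a b e x y f : A) :
    mulT3 μ ((a ⊗ₜ[k] b) ⊗ₜ[k] e) ((x ⊗ₜ[k] y) ⊗ₜ[k] f)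
      = (μ a x ⊗ₜ[k] μ b y) ⊗ₜ[k] μ e f := by
  simp [mulT3]

lemma mulT3_add_left (X X' Y : (A ⊗[k] A) ⊗[k] A) :
    mulT3 μ (X + X') Y = mulT3 μ X Y + mulT3 μ X' Y := by
  simp [mulT3, TensorProduct.add_tmul]

lemma mulT3_add_right (X Y Y' : (A ⊗[k] A) ⊗[k] A) :
    mulT3 μ X (Y + Y') = mulT3 μ X Y + mulT3 μ X Y' := by
  simp [mulT3, TensorProduct.tmul_add]

lemma mulT3_zero_left (Y : (A ⊗[k] A) ⊗[k] A) : mulT3 μ 0 Y = 0 := by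
  simp [mulT3, TensorProduct.zero_tmul]

lemma mulT3_zero_right (X : (A ⊗[k] A) ⊗[k] A) : mulT3 μ X 0 = 0 := by
  simp [mulT3, TensorProduct.tmul_zero]

lemma mulT3_sum_left {ι : Type*} (S : Finset ι) (f : ι → (A ⊗[k] A) ⊗[k] A)
    (Y : (A ⊗[k] A) ⊗[k] A) :
    mulT3 μ (S.sum f) Y = S.sum fun i => mulT3 μ (f i) Y := by
  simp [mulT3, TensorProduct.sum_tmul]

lemma mulT3_sum_right {ι : Type*} (S : Finset ι) (f : ι → (A ⊗[k] A) ⊗[k] A)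
    (X : (A ⊗[k] A) ⊗[k] A) :
    mulT3 μ X (S.sum f) = S.sum fun i => mulT3 μ X (f i) := by
  simp [mulT3, TensorProduct.tmul_sum]

/-- Key structural lemma: `mulT3` of two elements of the form `assoc.symm (a ⊗ X)`. -/
lemma mulT3_assocSymm (a b : A) (X Y : A ⊗[k] A) :
    mulT3 μ ((TensorProduct.assoc k A A A).symm (a ⊗ₜ[k] X))
        ((TensorProduct.assoc k A A A).symm (b ⊗ₜ[k] Y))
      = (TensorProduct.assoc k A A A).symm (μ a b ⊗ₜ[k] mulT2 μ X Y) := by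
  induction X using TensorProduct.induction_on with
  | zero => simp [mulT2, mulT3, TensorProduct.tmul_zero, TensorProduct.zero_tmul]
  | add X X' hX hX' =>
      simp only [TensorProduct.tmul_add, map_add, mulT3_add_left] at *
      rw [hX, hX']
      simp [mulT2, TensorProduct.add_tmul, TensorProduct.tmul_add]
  | tmul x y =>
      induction Y using TensorProduct.induction_on with
      | zero => simp [mulT2, mulT3, TensorProduct.tmul_zero, TensorProduct.zero_tmul]
      | add Y Y' hY hY' =>
          simp only [TensorProduct.tmul_add, map_add, mulT3_add_right] at *
          rw [hY, hY']
          simp [mulT2, TensorProduct.add_tmul, TensorProduct.tmul_add]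
      | tmul u v =>
          simp [TensorProduct.assoc_symm_tmul, mulT3_tmul, mulT2_tmul]

/-- Swap of the last two tensor factors of `(A ⊗ A) ⊗ A`. -/
noncomputable def swapLast : (A ⊗[k] A) ⊗[k] A →ₗ[k] (A ⊗[k] A) ⊗[k] A :=
  (TensorProduct.assoc k A A A).symm.toLinearMap ∘ₗ
    (TensorProduct.map LinearMap.id (TensorProduct.comm k A A).toLinearMap) ∘ₗ
    (TensorProduct.assoc k A A A).toLinearMap

lemma swapLast_tmul (a b e : A) :
    swapLast ((a ⊗ₜ[k] b) ⊗ₜ[k] e) = (a ⊗ₜ[k] e) ⊗ₜ[k] b := by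
  simp [swapLast]

lemma swapLast_assocSymm (Z : A ⊗[k] (A ⊗[k] A)) :
    swapLast ((TensorProduct.assoc k A A A).symm Z)
      = (TensorProduct.assoc k A A A).symm
        ((TensorProduct.map LinearMap.id (TensorProduct.comm k A A).toLinearMap) Z) := by
  induction Z using TensorProduct.induction_on with
  | zero => simp
  | add Z Z' hZ hZ' => simp [map_add, hZ, hZ']
  | tmul a X =>
      induction X using TensorProduct.induction_on with
      | zero => simp [TensorProduct.tmul_zero]
      | add X X' h h' => simp [TensorProduct.tmul_add, map_add] at *; rw [h, h']
      | tmul x y => simp [TensorProduct.assoc_symm_tmul, swapLast_tmul]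

/-- `R₁₂(X) · R₁₃(Y) = swapLast (R₁₃(X) · R₁₂(Y))`. -/
lemma mulT3_R12_R13 (c : A) (X Y : A ⊗[k] A) :
    mulT3 μ (R12e c X) (R13e c Y) = swapLast (mulT3 μ (R13e c X) (R12e c Y)) := by
  induction X using TensorProduct.induction_on with
  | zero => simp [R12e, R13e, R23e, mulT3_zero_left, TensorProduct.zero_tmul,
      TensorProduct.tmul_zero]
  | add X X' hX hX' =>
      simp only [R12e, R13e, R23e, TensorProduct.add_tmul, TensorProduct.tmul_add,
        map_add, mulT3_add_left] at *
      rw [hX, hX']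
  | tmul s t =>
      induction Y using TensorProduct.induction_on with
      | zero => simp [R12e, R13e, R23e, mulT3_zero_right, TensorProduct.zero_tmul,
          TensorProduct.tmul_zero]
      | add Y Y' hY hY' =>
          simp only [R12e, R13e, R23e, TensorProduct.add_tmul, TensorProduct.tmul_add,
            map_add, mulT3_add_right] at *
          rw [hY, hY']
      | tmul u v =>
          simp [R12e, R13e, R23e, mulT3_tmul, swapLast_tmul]

end Aux

/-- In a quasi-triangular Hom-bialgebra `(A, μ, Δ, α, c, R)`, the element `R`
satisfies the quantum Hom-Yang-Baxter equation `(R₁₂ R₁₃) R₂₃ = R₂₃ (R₁₃ R₁₂)`. -/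
theorem quantum_hom_yang_baxter_first
    (μ : A →ₗ[k] A →ₗ[k] A) (Δ : A →ₗ[k] A ⊗[k] A) (α : A →ₗ[k] A) (c : A) (R : A ⊗[k] A)
    -- Hom-associative algebra:
    (hαμ : ∀ x y : A, α (μ x y) = μ (α x) (α y))
    (hassoc : ∀ x y z : A, μ (μ x y) (α z) = μ (α x) (μ y z))
    -- Hom-coassociative coalgebra:
    (hαΔ : Δ ∘ₗ α = TensorProduct.map α α ∘ₗ Δ)
    (hcoassoc : (TensorProduct.assoc k A A A).toLinearMap ∘ₗ TensorProduct.map Δ α ∘ₗ Δ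
      = TensorProduct.map α Δ ∘ₗ Δ)
    -- Hom-bialgebra compatibility:
    (hcompat : ∀ x y : A, Δ (μ x y) = mulT2 μ (Δ x) (Δ y))
    -- weak unit:
    (hcl : ∀ x : A, μ c x = α x) (hcr : ∀ x : A, μ x c = α x)
    -- quasi-triangularity axioms:
    (hR1 : TensorProduct.map Δ α R = mulT3 μ (R13e c R) (R23e c R))
    (hR2 : (TensorProduct.assoc k A A A).symm (TensorProduct.map α Δ R)
      = mulT3 μ (R13e c R) (R12e c R))
    (hR3 : ∀ x : A, mulT2 μ ((TensorProduct.comm k A A) (Δ x)) R = mulT2 μ R (Δ x)) :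
    mulT3 μ (mulT3 μ (R12e c R) (R13e c R)) (R23e c R)
      = mulT3 μ (R23e c R) (mulT3 μ (R13e c R) (R12e c R)) := by
  classical
  obtain ⟨S, hS⟩ := TensorProduct.exists_finset R
  -- Step 1: rewrite R₁₂ R₁₃ using step lemma and hR2
  have step1 : mulT3 μ (R12e c R) (R13e c R)
      = swapLast ((TensorProduct.assoc k A A A).symm (TensorProduct.map α Δ R)) := by
    rw [mulT3_R12_R13, hR2]
  rw [step1, swapLast_assocSymm]
  have hW : TensorProduct.map α Δ R = S.sum fun p => α p.1 ⊗ₜ[k] Δ p.2 := by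
    rw [hS, map_sum]; simp
  rw [← hR2, hW]
  rw [map_sum, map_sum, map_sum, mulT3_sum_left, mulT3_sum_right]
  refine Finset.sum_congr rfl fun p _ => ?_
  have h1 : mulT3 μ
      ((TensorProduct.assoc k A A A).symm
        ((TensorProduct.map LinearMap.id (TensorProduct.comm k A A).toLinearMap)
          (α p.1 ⊗ₜ[k] Δ p.2)))
      (R23e c R)
      = (TensorProduct.assoc k A A A).symm
        (μ (α p.1) c ⊗ₜ[k] mulT2 μ ((TensorProduct.comm k A A) (Δ p.2)) R) := by
    rw [TensorProduct.map_tmul]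
    unfold R23e
    rw [mulT3_assocSymm]
    rfl
  have h2 : mulT3 μ (R23e c R)
      ((TensorProduct.assoc k A A A).symm (α p.1 ⊗ₜ[k] Δ p.2))
      = (TensorProduct.assoc k A A A).symm
        (μ c (α p.1) ⊗ₜ[k] mulT2 μ R (Δ p.2)) := by
    unfold R23e
    rw [mulT3_assocSymm]
  rw [h1, h2, hR3, hcr, hcl]
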